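/- If A is an n×n diagonal matrix with strictly positive diagonal entries and A = W·H with W, H non-negative n×n matrices, then there exists a permutation matrix P such that W·P and P⁻¹·H are both diagonal matrices with strictly positive diagonal entries, and for each i, (W·P)(i,i)·(P⁻¹·H)(i,i) = A(i,i). -/

import Mathlib

theorem stmt_2 (n : ℕ) (A W H : Matrix (Fin n) (Fin n) ℝ)
    (hAdiag : A.IsDiag) (hApos : ∀ i, 0 < A i i)
    (hW : ∀ i j, 0 ≤ W i j) (hH : ∀ i j, 0 ≤ H i j)
    (hmul : A = W * H) :
    ∃ σ : Equiv.Perm (Fin n),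
      (W * σ.permMatrix ℝ).IsDiag ∧ ((σ.permMatrix ℝ)⁻¹ * H).IsDiag ∧
      (∀ i, 0 < (W * σ.permMatrix ℝ) i i) ∧
      (∀ i, 0 < ((σ.permMatrix ℝ)⁻¹ * H) i i) ∧
      (∀ i, (W * σ.permMatrix ℝ) i i * ((σ.permMatrix ℝ)⁻¹ * H) i i = A i i) := by
  -- for i ≠ j, each term W i k * H k j is zero
  have hzero : ∀ i j, i ≠ j → ∀ k, W i k * H k j = 0 := by
    intro i j hij k
    have hAij : A i j = 0 := hAdiag hij
    rw [hmul, Matrix.mul_apply] at hAij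
    have := (Finset.sum_eq_zero_iff_of_nonneg
      (fun k _ => mul_nonneg (hW i k) (hH k j))).mp hAij
    exact this k (Finset.mem_univ k)
  -- for each i, choose k i with W i (k i) > 0 and H (k i) i > 0
  have hexists : ∀ i, ∃ k, 0 < W i k * H k i := by
    intro i
    by_contra h
    push_neg at h
    have : A i i ≤ 0 := by
      rw [hmul, Matrix.mul_apply]
      exact Finset.sum_nonpos fun k _ => h k
    exact absurd (hApos i) (not_lt.mpr this)
  choose k hk using hexists
  have hWk : ∀ i, 0 < W i (k i) := fun i =>
    (mul_pos_iff.mp (hk i)).elim (fun h => h.1)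
      (fun h => absurd h.2 (not_lt.mpr (hH _ _)))
  have hHk : ∀ i, 0 < H (k i) i := fun i =>
    (mul_pos_iff.mp (hk i)).elim (fun h => h.2)
      (fun h => absurd h.1 (not_lt.mpr (hW _ _)))
  -- k is injective
  have hkinj : Function.Injective k := by
    intro i j hij
    by_contra hne
    have h0 := hzero i j hne (k i)
    rw [hij] at h0
    exact absurd h0 (ne_of_gt (mul_pos (by rw [← hij]; exact hWk i) (hHk j)))
  have hkbij : Function.Bijective k := Finite.injective_iff_bijective.mp hkinj
  set e := Equiv.ofBijective k hkbij with he
  refine ⟨e.symm, ?_⟩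
  have hP : (Equiv.Perm.permMatrix ℝ e.symm)⁻¹ = (Equiv.Perm.permMatrix ℝ e) := by
    apply Matrix.inv_eq_right_inv
    rw [Equiv.Perm.permMatrix, Equiv.Perm.permMatrix, ← PEquiv.toMatrix_trans,
      ← Equiv.toPEquiv_trans]
    simp
  have hWP : W * Equiv.Perm.permMatrix ℝ e.symm = W.submatrix id e.symm.symm :=
    PEquiv.mul_toMatrix_toPEquiv W e.symm
  have hPH : (Equiv.Perm.permMatrix ℝ e.symm)⁻¹ * H = H.submatrix e id := by
    rw [hP]; exact PEquiv.toMatrix_toPEquiv_mul e H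
  have hWe : ∀ i j, (W * Equiv.Perm.permMatrix ℝ e.symm) i j = W i (k j) := by
    intro i j; rw [hWP]; simp [he, Equiv.ofBijective_apply]
  have hHe : ∀ i j, ((Equiv.Perm.permMatrix ℝ e.symm)⁻¹ * H) i j = H (k i) j := by
    intro i j; rw [hPH]; simp [he, Equiv.ofBijective_apply]
  refine ⟨?_, ?_, ?_, ?_, ?_⟩
  · intro i j hij
    rw [hWe]
    exact (mul_eq_zero.mp (hzero i j hij (k j))).resolve_right (ne_of_gt (hHk j))
  · intro i j hij
    rw [hHe]
    exact (mul_eq_zero.mp (hzero i j hij (k i))).resolve_left (ne_of_gt (hWk i))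
  · intro i; rw [hWe]; exact hWk i
  · intro i; rw [hHe]; exact hHk i
  · intro i
    rw [hWe, hHe, hmul, Matrix.mul_apply]
    symm
    apply Finset.sum_eq_single (k i)
    · intro b _ hb
      obtain ⟨j, rfl⟩ := hkbij.surjective b
      have hji : j ≠ i := fun h => hb (by rw [h])
      have hWij : W i (k j) = 0 :=
        (mul_eq_zero.mp (hzero i j (Ne.symm hji) (k j))).resolve_right (ne_of_gt (hHk j))
      rw [hWij, zero_mul]
    · intro h; exact absurd (Finset.mem_univ _) h
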